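/- For any natural number n and any integer p with 0 ≤ p ≤ n, the sum over k from p to n of C(n,k)·(n−2k) equals −p·C(n,p). -/

import Mathlib

theorem stmt_0 (n p : ℕ) (hp : p ≤ n) :
    ∑ k ∈ Finset.Icc p n, (n.choose k : ℤ) * ((n : ℤ) - 2 * k) =
      -(p : ℤ) * (n.choose p : ℤ) := by
  set g : ℕ → ℤ := fun k => (k : ℤ) * (n.choose k : ℤ) with hg
  have key : ∀ k ∈ Finset.Icc p n, (n.choose k : ℤ) * ((n : ℤ) - 2 * k) =
      g (k+1) - g k := by
    intro k hk
    have hkn : k ≤ n := (Finset.mem_Icc.mp hk).2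
    have h : n.choose (k+1) * (k+1) = n.choose k * (n - k) := Nat.choose_succ_right_eq n k
    have h2 : (n.choose (k+1) : ℤ) * (k+1) = (n.choose k : ℤ) * ((n : ℤ) - k) := by
      have := congrArg (Nat.cast : ℕ → ℤ) h
      push_cast [Nat.cast_sub hkn] at this
      linarith
    simp only [hg]
    push_cast
    linarith
  rw [Finset.sum_congr rfl key, ← Finset.Ico_add_one_right_eq_Icc, Finset.sum_Ico_eq_sum_range]
  have tel := Finset.sum_range_sub (fun i => g (p + i)) (n.succ - p)
  simp only [← add_assoc] at tel
  rw [← Nat.succ_eq_add_one n, tel]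
  have hpn : p + (n.succ - p) = n + 1 := by omega
  rw [hpn, hg]
  simp [Nat.choose_succ_self]
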